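/- Let (Θ, 𝓕) be a measurable space, Q a probability measure on Θ, Θ₀ ⊆ Θ a measurable set, and β : Θ → ℝ measurable with 0 ≤ β(θ) ≤ 1 for all θ. Let C, R, τ be real numbers with C > 0, R > 0, τ > 0. Assume β(θ) ≤ τ for every θ ∈ Θ₀ and ∫_Θ β dQ ≥ C/R. Then ∫_Θ β dQ > 0 and the posterior probability of the null given approval satisfies (∫_{Θ₀} β dQ) / (∫_Θ β dQ) ≤ τ·R/C. -/

import Mathlib

open MeasureTheory

/-- Theorem 1, rearranged form (equation (3)): the Bayes FDR is at most τR/C. -/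
theorem bayes_fdr_bound
    {Θ : Type*} [MeasurableSpace Θ]
    (Q : Measure Θ) [IsProbabilityMeasure Q]
    (Θ₀ : Set Θ) (hΘ₀ : MeasurableSet Θ₀)
    (β : Θ → ℝ) (hβmeas : Measurable β)
    (hβ0 : ∀ θ, 0 ≤ β θ) (hβ1 : ∀ θ, β θ ≤ 1)
    (C R τ : ℝ) (hC : 0 < C) (hR : 0 < R) (hτ : 0 < τ)
    (hvalid : ∀ θ ∈ Θ₀, β θ ≤ τ)
    (hparticipate : ∫ θ, β θ ∂Q ≥ C / R) :
    0 < ∫ θ, β θ ∂Q ∧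
      (∫ θ in Θ₀, β θ ∂Q) / (∫ θ, β θ ∂Q) ≤ τ * R / C := by
  have hCR : 0 < C / R := div_pos hC hR
  have hpos : 0 < ∫ θ, β θ ∂Q := lt_of_lt_of_le hCR hparticipate
  refine ⟨hpos, ?_⟩
  have hint : Integrable β Q := by
    refine Integrable.mono' (integrable_const 1) hβmeas.aestronglyMeasurable ?_
    filter_upwards with θ
    rw [Real.norm_eq_abs, abs_le]
    exact ⟨le_trans (by norm_num) (hβ0 θ), hβ1 θ⟩
  have hnum : ∫ θ in Θ₀, β θ ∂Q ≤ τ := by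
    calc ∫ θ in Θ₀, β θ ∂Q ≤ ∫ _ in Θ₀, τ ∂Q := by
          refine setIntegral_mono_on hint.integrableOn (integrableOn_const ?_) hΘ₀ hvalid
          exact (measure_lt_top Q Θ₀).ne
      _ = (Q Θ₀).toReal * τ := by simp [smul_eq_mul, Measure.real]
      _ ≤ 1 * τ := by
          refine mul_le_mul_of_nonneg_right ?_ hτ.le
          exact ENNReal.toReal_le_of_le_ofReal zero_le_one (by simp [prob_le_one])
      _ = τ := one_mul τ
  calc (∫ θ in Θ₀, β θ ∂Q) / (∫ θ, β θ ∂Q) ≤ τ / (C / R) :=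
        div_le_div₀ hτ.le hnum hCR hparticipate
    _ = τ * R / C := by field_simp
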